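/- arXiv:2110.09372 — 2 statements merged into one kernel-verified Lean document; each statement's English description precedes it below -/
import Mathlib

section
/- Let t_1, t_2, t_3 > 0, t_4 = 1, let mu(k) = t_1 + i t_2 e^{i k_1} - t_3 e^{i (k_1+k_2)} - i e^{i k_2}, and let p in [-pi,pi]^2 satisfy mu(p) = 0. Set K_{p,r} = i^{r-1} t_r e^{-i p . v_r} for r in {1,2,3,4}, alpha = d mu / d k_1 (p), beta = d mu / d k_2 (p), and phi_p(x) = beta x_1 - alpha x_2. Then (identifying each face with the type-r edges it crosses on the unit lattice, a = 1): for every x in Z^2, every j in {1,2}, and EVERY dual path C from the face eta_x to the face eta_{x + e_j}, the sum over e in C of sigma_e * K_{p, r(e)} takes the same value, equal to -i times the partial derivative in direction j of phi_p; explicitly, it equals -i beta for j = 1 and +i alpha for j = 2. (Path independence uses that K_{p,1} + K_{p,2} + K_{p,3} + K_{p,4} = mu(p) = 0.) -/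
/-!
STATEMENT 10: The path-independent elementary sum rule `∑_{e ∈ C} σ_e K_{p,r(e)} =
-i ∂_j φ_p` for dual paths joining the faces `η_x` and `η_{x+e_j}`, for any zero `p`
of the dispersion relation.
-/

noncomputable section

/-- The displacements `v_r`. -/
def vv : Fin 4 → ℤ × ℤ := ![(0, 0), (-1, 0), (-1, -1), (0, -1)]

/-- The weights `t_1, t_2, t_3, t_4 = 1`. -/
def tw (t1 t2 t3 : ℝ) : Fin 4 → ℝ := ![t1, t2, t3, 1]

/-- The dispersion relation `μ(k) = t₁ + i t₂ e^{i k₁} - t₃ e^{i(k₁+k₂)} - i e^{i k₂}`. -/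
def mu (t1 t2 t3 : ℝ) (k : ℝ × ℝ) : ℂ :=
  t1 + Complex.I * t2 * Complex.exp (Complex.I * k.1) -
    t3 * Complex.exp (Complex.I * (k.1 + k.2)) - Complex.I * Complex.exp (Complex.I * k.2)

/-- `α = ∂μ/∂k₁`. -/
def dmu1 (t2 t3 : ℝ) (k : ℝ × ℝ) : ℂ :=
  -t2 * Complex.exp (Complex.I * k.1) - Complex.I * t3 * Complex.exp (Complex.I * (k.1 + k.2))

/-- `β = ∂μ/∂k₂`. -/
def dmu2 (t3 : ℝ) (k : ℝ × ℝ) : ℂ :=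
  -Complex.I * t3 * Complex.exp (Complex.I * (k.1 + k.2)) + Complex.exp (Complex.I * k.2)

/-- `K_{p,r} = i^{r-1} t_r e^{-i p·v_r}`. -/
def Kp (t1 t2 t3 : ℝ) (p : ℝ × ℝ) (r : Fin 4) : ℂ :=
  Complex.I ^ (r : ℕ) * tw t1 t2 t3 r *
    Complex.exp (-Complex.I * (p.1 * ((vv r).1 : ℝ) + p.2 * ((vv r).2 : ℝ)))

/-- A face of the lattice: `((m,n), true)` is the face `η_{(m,n)}` with black bottom
vertex `(m,n)`; `((m,n), false)` is the face centered at `(m+1/2, n)`. -/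
abbrev Face := (ℤ × ℤ) × Bool

/-- One step of a dual path: the neighboring face, the crossed edge (black endpoint and
type) and the crossing sign `σ_e` (`+1` iff the white endpoint of the crossed edge lies
to the right of the direction of motion). -/
def faceStep (f : Face) (d : Fin 4) : Face × ((ℤ × ℤ) × Fin 4) × ℤ :=
  match f, (d : ℕ) with
  | ((m, n), true), 0 => ((((m, n), false)), ((m, n), 0), -1)
  | ((m, n), true), 1 => ((((m - 1, n), false)), ((m, n), 1), 1)
  | ((m, n), true), 2 => ((((m, n + 1), false)), ((m, n + 1), 3), 1)
  | ((m, n), true), _ => ((((m - 1, n + 1), false)), ((m, n + 1), 2), -1)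
  | ((m, n), false), 0 => ((((m, n), true)), ((m, n), 0), 1)
  | ((m, n), false), 1 => ((((m + 1, n), true)), ((m + 1, n), 1), -1)
  | ((m, n), false), 2 => ((((m, n - 1), true)), ((m, n), 3), -1)
  | ((m, n), false), _ => ((((m + 1, n - 1), true)), ((m + 1, n), 2), 1)

def endFace : Face → List (Fin 4) → Face
  | f, [] => f
  | f, d :: s => endFace (faceStep f d).1 s

/-- `∑_{e ∈ C} σ_e F(e)` along a dual path, complex-valued version. -/
def pathSumC (F : (ℤ × ℤ) → Fin 4 → ℂ) : Face → List (Fin 4) → ℂ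
  | _, [] => 0
  | f, d :: s =>
      ((faceStep f d).2.2 : ℂ) * F (faceStep f d).2.1.1 (faceStep f d).2.1.2 +
        pathSumC F (faceStep f d).1 s

/-- The unit coordinate vectors of `ℤ²`. -/
def ej : Fin 2 → ℤ × ℤ := ![(1, 0), (0, 1)]

/-- A discrete potential on faces whose increments match `σ_e K_{r(e)}`. -/
def Phi (Ki : Fin 4 → ℂ) : Face → ℂ
  | ((m, n), true) => -(m : ℂ) * (Ki 0 + Ki 1) + (n : ℂ) * (Ki 0 + Ki 3)
  | ((m, n), false) => -(m : ℂ) * (Ki 0 + Ki 1) + (n : ℂ) * (Ki 0 + Ki 3) - Ki 0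

lemma step_eq (Ki : Fin 4 → ℂ) (h : Ki 0 + Ki 1 + Ki 2 + Ki 3 = 0)
    (f : Face) (d : Fin 4) :
    ((faceStep f d).2.2 : ℂ) * Ki (faceStep f d).2.1.2 =
      Phi Ki (faceStep f d).1 - Phi Ki f := by
  have h2 : Ki 2 = -Ki 0 - Ki 1 - Ki 3 := by linear_combination h
  obtain ⟨⟨m, n⟩, b⟩ := f
  cases b <;> fin_cases d <;>
    simp only [faceStep, Phi, h2] <;> push_cast <;> ring

lemma sum_eq (Ki : Fin 4 → ℂ) (h : Ki 0 + Ki 1 + Ki 2 + Ki 3 = 0) :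
    ∀ (s : List (Fin 4)) (f : Face),
      pathSumC (fun _ r => Ki r) f s = Phi Ki (endFace f s) - Phi Ki f := by
  intro s
  induction s with
  | nil => intro f; simp [pathSumC, endFace]
  | cons d s ih =>
      intro f
      rw [pathSumC, endFace, ih, step_eq Ki h]
      ring

lemma Kp0 (t1 t2 t3 : ℝ) (p : ℝ × ℝ) : Kp t1 t2 t3 p 0 = (t1 : ℂ) := by
  simp [Kp, vv, tw]

lemma Kp1 (t1 t2 t3 : ℝ) (p : ℝ × ℝ) :
    Kp t1 t2 t3 p 1 = Complex.I * t2 * Complex.exp (Complex.I * p.1) := by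
  simp only [Kp, vv, tw]; norm_num

lemma Kp2 (t1 t2 t3 : ℝ) (p : ℝ × ℝ) :
    Kp t1 t2 t3 p 2 = -t3 * Complex.exp (Complex.I * (p.1 + p.2)) := by
  simp only [Kp, vv, tw]; norm_num
  rw [show (![t1, t2, t3, 1] 2 : ℝ) = t3 from rfl,
    show (![(0, 0), (-1, 0), (-1, -1), (0, -1)] 2 : ℤ × ℤ) = (-1, -1) from rfl]
  congr 2; push_cast; ring

lemma Kp3 (t1 t2 t3 : ℝ) (p : ℝ × ℝ) :
    Kp t1 t2 t3 p 3 = -Complex.I * Complex.exp (Complex.I * p.2) := by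
  simp only [Kp, vv, tw]; norm_num
  rw [show (![t1, t2, t3, 1] 3 : ℝ) = 1 from rfl,
    show (![(0, 0), (-1, 0), (-1, -1), (0, -1)] 3 : ℤ × ℤ) = (0, -1) from rfl]
  congr 2 <;> simp <;> ring

lemma Kp_sum (t1 t2 t3 : ℝ) (p : ℝ × ℝ) :
    Kp t1 t2 t3 p 0 + Kp t1 t2 t3 p 1 + Kp t1 t2 t3 p 2 + Kp t1 t2 t3 p 3 =
      mu t1 t2 t3 p := by
  rw [Kp0, Kp1, Kp2, Kp3, mu]; ring

/-- If `μ(p) = 0` then, for every `x ∈ ℤ²`, every `j ∈ {1,2}` and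
EVERY dual path `C` from the face `η_x` to the face `η_{x+e_j}`, the sum
`∑_{e ∈ C} σ_e K_{p,r(e)}` equals `-i ∂_j φ_p`, i.e. `-iβ` for `j = 1` and `+iα` for
`j = 2`. -/
theorem lattice_sum_rule
    (t1 t2 t3 : ℝ) (ht1 : 0 < t1) (ht2 : 0 < t2) (ht3 : 0 < t3)
    (p : ℝ × ℝ) (hp : mu t1 t2 t3 p = 0) :
    ∀ (x : ℤ × ℤ) (j : Fin 2) (s : List (Fin 4)),
      endFace (x, true) s = (x + ej j, true) →
      pathSumC (fun _ r => Kp t1 t2 t3 p r) (x, true) s =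
        if j = 0 then -Complex.I * dmu2 t3 p else Complex.I * dmu1 t2 t3 p := by
  have h : Kp t1 t2 t3 p 0 + Kp t1 t2 t3 p 1 + Kp t1 t2 t3 p 2 + Kp t1 t2 t3 p 3 = 0 := by
    rw [Kp_sum]; exact hp
  intro x j s hC
  rw [show (fun (_ : ℤ × ℤ) r => Kp t1 t2 t3 p r) = fun _ r => (Kp t1 t2 t3 p) r from rfl,
    sum_eq _ h, hC]
  obtain ⟨m, n⟩ := x
  fin_cases j
  · have hj0 : -(Kp t1 t2 t3 p 0 + Kp t1 t2 t3 p 1) = -Complex.I * dmu2 t3 p := by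
      have h' := h
      rw [Kp2, Kp3] at h'
      rw [dmu2]
      linear_combination -h' - (t3 : ℂ) * Complex.exp (Complex.I * (p.1 + p.2)) * Complex.I_sq
    simp only [ej, Matrix.cons_val_zero, Prod.mk_add_mk, Fin.isValue, reduceIte]
    rw [← hj0]
    simp only [Phi]
    norm_num
    ring
  · have hj1 : Kp t1 t2 t3 p 0 + Kp t1 t2 t3 p 3 = Complex.I * dmu1 t2 t3 p := by
      have h' := h
      rw [Kp1, Kp2] at h'
      rw [dmu1]
      linear_combination h' + (t3 : ℂ) * Complex.exp (Complex.I * (p.1 + p.2)) * Complex.I_sq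
    simp only [ej, Matrix.cons_val_one, Matrix.head_cons, Prod.mk_add_mk, Fin.isValue, reduceIte]
    rw [← hj1]
    simp only [Phi]
    norm_num
    ring
end
end

section
/- Let z_1, z_2, z_3, z_4 be four distinct complex numbers such that the closed straight-line segments [z_1, z_2] and [z_3, z_4] are disjoint. Then minus the real part of the iterated contour integral of 1/(z - z')^2, taken with z' along the segment from z_3 to z_4 and z along the segment from z_1 to z_2, equals log( ( |z_4 - z_1| * |z_3 - z_2| ) / ( |z_4 - z_2| * |z_3 - z_1| ) ). -/
/-!
STATEMENT 15: The iterated contour integral of `1/(z-z')²` along two disjoint segments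
computes the Gaussian-free-field logarithmic covariance.
-/

noncomputable section

open intervalIntegral Set

private lemma hasDerivAt_log_abs (f : ℝ → ℂ) (b : ℂ) (t : ℝ) (hf : HasDerivAt f b t)
    (h0 : f t ≠ 0) :
    HasDerivAt (fun t => Real.log ‖f t‖) ((b / f t).re) t := by
  have hre : HasDerivAt (fun t => (f t).re) b.re t :=
    (Complex.reCLM.hasFDerivAt.comp_hasDerivAt t hf)
  have him : HasDerivAt (fun t => (f t).im) b.im t :=
    (Complex.imCLM.hasFDerivAt.comp_hasDerivAt t hf)
  have hN : HasDerivAt (fun t => (f t).re * (f t).re + (f t).im * (f t).im)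
      ((b.re * (f t).re + (f t).re * b.re) + (b.im * (f t).im + (f t).im * b.im)) t :=
    (hre.mul hre).add (him.mul him)
  have hN0 : (f t).re * (f t).re + (f t).im * (f t).im ≠ 0 := by
    rw [← Complex.normSq_apply]
    exact ne_of_gt (Complex.normSq_pos.2 h0)
  have hlog : HasDerivAt (fun t => Real.log ((f t).re * (f t).re + (f t).im * (f t).im))
      ((((b.re * (f t).re + (f t).re * b.re) + (b.im * (f t).im + (f t).im * b.im))) *
        ((f t).re * (f t).re + (f t).im * (f t).im)⁻¹) t := by
    have := (Real.hasDerivAt_log hN0).comp t hN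
    simpa [mul_comm, Function.comp_def] using this
  have heq : (fun t => Real.log ‖f t‖)
      = fun t => Real.log ((f t).re * (f t).re + (f t).im * (f t).im) / 2 := by
    funext u
    rw [← Complex.normSq_apply, Complex.norm_def, Real.log_sqrt (Complex.normSq_nonneg _)]
  rw [heq]
  refine (hlog.div_const 2).congr_deriv ?_
  rw [Complex.div_re, Complex.normSq_apply]
  field_simp
  ring

/-- For four distinct complex numbers with `[z₁,z₂] ∩ [z₃,z₄] = ∅`,
`-Re ∫_{[z₁,z₂]} dz ∫_{[z₃,z₄]} dz' (z-z')⁻² = log (|z₄-z₁||z₃-z₂| / (|z₄-z₂||z₃-z₁|))`,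
the contour integral along the segment from `u` to `v` being
`∫₀¹ f(u + t(v-u)) (v-u) dt`. -/
theorem iterated_segment_integral_log
    (z1 z2 z3 z4 : ℂ)
    (h12 : z1 ≠ z2) (h13 : z1 ≠ z3) (h14 : z1 ≠ z4)
    (h23 : z2 ≠ z3) (h24 : z2 ≠ z4) (h34 : z3 ≠ z4)
    (hdisj : Disjoint (segment ℝ z1 z2) (segment ℝ z3 z4)) :
    -(∫ t in (0:ℝ)..1,
        (∫ s in (0:ℝ)..1,
          (1 / ((z1 + (t : ℂ) * (z2 - z1)) - (z3 + (s : ℂ) * (z4 - z3))) ^ 2) *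
            (z4 - z3)) *
          (z2 - z1)).re =
      Real.log ((‖z4 - z1‖ * ‖z3 - z2‖) /
        (‖z4 - z2‖ * ‖z3 - z1‖)) := by
  -- points on the two segments are distinct
  have hne : ∀ t ∈ Icc (0:ℝ) 1, ∀ s ∈ Icc (0:ℝ) 1,
      z1 + (t : ℂ) * (z2 - z1) ≠ z3 + (s : ℂ) * (z4 - z3) := by
    intro t ht s hs
    have hmem1 : z1 + (t : ℂ) * (z2 - z1) ∈ segment ℝ z1 z2 := by
      rw [segment_eq_image']
      exact ⟨t, ht, by simp [Complex.real_smul]⟩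
    have hmem2 : z3 + (s : ℂ) * (z4 - z3) ∈ segment ℝ z3 z4 := by
      rw [segment_eq_image']
      exact ⟨s, hs, by simp [Complex.real_smul]⟩
    intro h
    exact (hdisj.ne_of_mem hmem1 hmem2) h
  -- abbreviation for the point on the first segment
  set Z : ℝ → ℂ := fun t => z1 + (t : ℂ) * (z2 - z1) with hZ
  have hZ0 : Z 0 = z1 := by simp [hZ]
  have hZ1 : Z 1 = z2 := by simp [hZ]
  have hne4 : ∀ t ∈ Icc (0:ℝ) 1, Z t - z4 ≠ 0 := by
    intro t ht
    have h := hne t ht 1 ⟨zero_le_one, le_refl 1⟩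
    rw [show z3 + ((1:ℝ):ℂ) * (z4 - z3) = z4 by push_cast; ring] at h
    rw [sub_ne_zero]
    exact h
  have hne3 : ∀ t ∈ Icc (0:ℝ) 1, Z t - z3 ≠ 0 := by
    intro t ht
    have h := hne t ht 0 ⟨le_refl 0, zero_le_one⟩
    rw [show z3 + ((0:ℝ):ℂ) * (z4 - z3) = z3 by push_cast; ring] at h
    rw [sub_ne_zero]
    exact h
  -- inner integral evaluation
  have inner_eval : ∀ t ∈ Icc (0:ℝ) 1,
      (∫ s in (0:ℝ)..1,
        (1 / ((Z t) - (z3 + (s : ℂ) * (z4 - z3))) ^ 2) * (z4 - z3))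
        = ((Z t) - z4)⁻¹ - ((Z t) - z3)⁻¹ := by
    intro t ht
    have hg : ∀ s : ℝ, HasDerivAt (fun s : ℝ => (Z t) - (z3 + (s : ℂ) * (z4 - z3)))
        (-(z4 - z3)) s := by
      intro s
      have h1 : HasDerivAt (fun s : ℝ => (s:ℂ)) 1 s := by
        simpa using (hasDerivAt_id s).ofReal_comp
      have h2 : HasDerivAt (fun s : ℝ => (s:ℂ) * (z4 - z3)) (z4 - z3) s := by
        simpa using h1.mul_const (z4 - z3)
      have h3 := (h2.const_add z3).const_sub (Z t)
      simpa using h3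
    have hgne : ∀ s ∈ Icc (0:ℝ) 1, (Z t) - (z3 + (s : ℂ) * (z4 - z3)) ≠ 0 := by
      intro s hs
      rw [sub_ne_zero]
      exact hne t ht s hs
    have hderiv : ∀ s ∈ uIcc (0:ℝ) 1,
        HasDerivAt (fun s : ℝ => ((Z t) - (z3 + (s : ℂ) * (z4 - z3)))⁻¹)
          ((1 / ((Z t) - (z3 + (s : ℂ) * (z4 - z3))) ^ 2) * (z4 - z3)) s := by
      intro s hs
      rw [uIcc_of_le zero_le_one] at hs
      have hinv := HasDerivAt.div (hasDerivAt_const s (1:ℂ)) (hg s) (hgne s hs)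
      simp only [one_div, Pi.div_def] at hinv
      refine hinv.congr_deriv ?_
      rw [zero_mul, one_mul, zero_sub, neg_neg, div_eq_mul_inv, div_eq_mul_inv, one_mul,
        mul_comm]
    have hcont : ContinuousOn
        (fun s : ℝ => (1 / ((Z t) - (z3 + (s : ℂ) * (z4 - z3))) ^ 2) * (z4 - z3))
        (uIcc (0:ℝ) 1) := by
      rw [uIcc_of_le zero_le_one]
      apply ContinuousOn.mul _ continuousOn_const
      apply ContinuousOn.div continuousOn_const
      · fun_prop
      · intro s hs
        exact pow_ne_zero 2 (hgne s hs)
    have hint : IntervalIntegrable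
        (fun s : ℝ => (1 / ((Z t) - (z3 + (s : ℂ) * (z4 - z3))) ^ 2) * (z4 - z3))
        MeasureTheory.volume 0 1 := hcont.intervalIntegrable
    have := intervalIntegral.integral_eq_sub_of_hasDerivAt hderiv hint
    rw [this]
    simp
  -- rewrite the outer integrand
  have outer_congr :
      (∫ t in (0:ℝ)..1,
        (∫ s in (0:ℝ)..1,
          (1 / ((Z t) - (z3 + (s : ℂ) * (z4 - z3))) ^ 2) * (z4 - z3)) * (z2 - z1))
      = ∫ t in (0:ℝ)..1, (((Z t) - z4)⁻¹ - ((Z t) - z3)⁻¹) * (z2 - z1) := by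
    apply intervalIntegral.integral_congr
    intro t ht
    rw [uIcc_of_le zero_le_one] at ht
    dsimp only
    rw [inner_eval t ht]
  rw [show (∫ t in (0:ℝ)..1,
        (∫ s in (0:ℝ)..1,
          (1 / ((z1 + (t : ℂ) * (z2 - z1)) - (z3 + (s : ℂ) * (z4 - z3))) ^ 2) *
            (z4 - z3)) * (z2 - z1))
      = ∫ t in (0:ℝ)..1, (((Z t) - z4)⁻¹ - ((Z t) - z3)⁻¹) * (z2 - z1) from outer_congr]
  -- integrability of the new outer integrand
  have hcont2 : ContinuousOn (fun t : ℝ => (((Z t) - z4)⁻¹ - ((Z t) - z3)⁻¹) * (z2 - z1))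
      (uIcc (0:ℝ) 1) := by
    rw [uIcc_of_le zero_le_one]
    apply ContinuousOn.mul _ continuousOn_const
    apply ContinuousOn.sub
    · apply ContinuousOn.inv₀ (by fun_prop) (fun t ht => hne4 t ht)
    · apply ContinuousOn.inv₀ (by fun_prop) (fun t ht => hne3 t ht)
  have hint2 : IntervalIntegrable (fun t : ℝ => (((Z t) - z4)⁻¹ - ((Z t) - z3)⁻¹) * (z2 - z1))
      MeasureTheory.volume 0 1 := hcont2.intervalIntegrable
  -- move Re inside the integral
  have hre_swap : (∫ t in (0:ℝ)..1, (((Z t) - z4)⁻¹ - ((Z t) - z3)⁻¹) * (z2 - z1)).re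
      = ∫ t in (0:ℝ)..1, ((((Z t) - z4)⁻¹ - ((Z t) - z3)⁻¹) * (z2 - z1)).re := by
    exact (ContinuousLinearMap.intervalIntegral_comp_comm Complex.reCLM hint2).symm
  rw [hre_swap]
  -- FTC for the real integrand via log of absolute values
  have hZd : ∀ t : ℝ, HasDerivAt Z (z2 - z1) t := by
    intro t
    have h1 : HasDerivAt (fun t : ℝ => (t:ℂ)) 1 t := by
      simpa using (hasDerivAt_id t).ofReal_comp
    have h2 : HasDerivAt (fun t : ℝ => (t:ℂ) * (z2 - z1)) (z2 - z1) t := by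
      simpa using h1.mul_const (z2 - z1)
    simpa [hZ] using h2.const_add z1
  have hderiv2 : ∀ t ∈ uIcc (0:ℝ) 1,
      HasDerivAt (fun t => Real.log ‖Z t - z4‖ - Real.log ‖Z t - z3‖)
        (((((Z t) - z4)⁻¹ - ((Z t) - z3)⁻¹) * (z2 - z1)).re) t := by
    intro t ht
    rw [uIcc_of_le zero_le_one] at ht
    have h4 := hasDerivAt_log_abs (fun t => Z t - z4) (z2 - z1) t ((hZd t).sub_const z4)
      (hne4 t ht)
    have h3 := hasDerivAt_log_abs (fun t => Z t - z3) (z2 - z1) t ((hZd t).sub_const z3)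
      (hne3 t ht)
    have := h4.sub h3
    refine this.congr_deriv ?_
    have e : ∀ w : ℂ, (w⁻¹ * (z2 - z1)) = (z2 - z1) / w := fun w => by
      rw [div_eq_mul_inv, mul_comm]
    rw [sub_mul, e, e, Complex.sub_re]
  have hint3 : IntervalIntegrable
      (fun t : ℝ => ((((Z t) - z4)⁻¹ - ((Z t) - z3)⁻¹) * (z2 - z1)).re)
      MeasureTheory.volume 0 1 := by
    apply ContinuousOn.intervalIntegrable
    exact Complex.continuous_re.comp_continuousOn hcont2
  rw [intervalIntegral.integral_eq_sub_of_hasDerivAt hderiv2 hint3]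
  rw [hZ0, hZ1]
  -- final log algebra
  have a41 : ‖z4 - z1‖ ≠ 0 := by
    simp [sub_ne_zero]; exact fun h => h14 h.symm
  have a32 : ‖z3 - z2‖ ≠ 0 := by
    simp [sub_ne_zero]; exact fun h => h23 h.symm
  have a42 : ‖z4 - z2‖ ≠ 0 := by
    simp [sub_ne_zero]; exact fun h => h24 h.symm
  have a31 : ‖z3 - z1‖ ≠ 0 := by
    simp [sub_ne_zero]; exact fun h => h13 h.symm
  rw [Real.log_div (mul_ne_zero a41 a32) (mul_ne_zero a42 a31),
    Real.log_mul a41 a32, Real.log_mul a42 a31,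
    norm_sub_rev z4 z1, norm_sub_rev z3 z2,
    norm_sub_rev z4 z2, norm_sub_rev z3 z1]
  ring
end
end
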